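/- Let μ : ℝ → ℝ be twice differentiable, let x* ∈ ℝ, and set A := μ'(x*) > 0 and B := μ''(x*) < 0. Define g : ℝ → ℝ by g(x) = μ(x) for x ≤ x*, and g(x) = μ(x*) + (A²/B)·ln(−A/B) − (A²/B)·ln(x − x* − A/B) for x > x*. Then g is differentiable at every point of ℝ; its derivative satisfies g'(x) = μ'(x) for x ≤ x* and g'(x) = −A²/( B·(x − x* − A/B) ) for x ≥ x*; in particular g'(x*) = μ'(x*) = A and g is continuous on ℝ. -/

import Mathlib

/-- the upper log-extension g of μ beyond x* (with A = μ'(x*) > 0 and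
B = μ''(x*) < 0) is differentiable everywhere, with g' = μ' on (-∞, x*] and
g'(x) = −A²/(B(x − x* − A/B)) on [x*, ∞); in particular g'(x*) = A and g is
continuous. -/
theorem stmt_7 (μ μ' μ'' : ℝ → ℝ)
    (hμd : ∀ x, HasDerivAt μ (μ' x) x)
    (hμd' : ∀ x, HasDerivAt μ' (μ'' x) x)
    (xs A B : ℝ) (hA : A = μ' xs) (hB : B = μ'' xs)
    (hApos : 0 < A) (hBneg : B < 0)
    (g : ℝ → ℝ)
    (hg : ∀ x, g x = if x ≤ xs then μ x
      else μ xs + (A^2 / B) * Real.log (-A / B)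
        - (A^2 / B) * Real.log (x - xs - A / B)) :
    ∃ g' : ℝ → ℝ,
      (∀ x, HasDerivAt g (g' x) x) ∧
      (∀ x ≤ xs, g' x = μ' x) ∧
      (∀ x ≥ xs, g' x = -A^2 / (B * (x - xs - A / B))) ∧
      g' xs = A ∧
      Continuous g := by
  have hAne : A ≠ 0 := ne_of_gt hApos
  have hBne : B ≠ 0 := ne_of_lt hBneg
  have hABpos : 0 < -A / B := div_pos_of_neg_of_neg (neg_lt_zero.mpr hApos) hBneg
  have hABneg : A / B < 0 := div_neg_of_pos_of_neg hApos hBneg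
  have hpos : ∀ x, xs ≤ x → 0 < x - xs - A / B := by
    intro x hx; linarith
  have hval : -A ^ 2 / (B * (xs - xs - A / B)) = A := by
    field_simp
    ring_nf
    field_simp
  set h : ℝ → ℝ := fun y => μ xs + (A ^ 2 / B) * Real.log (-A / B)
      - (A ^ 2 / B) * Real.log (y - xs - A / B) with hh
  have hderivh : ∀ x, x - xs - A / B ≠ 0 →
      HasDerivAt h (-A ^ 2 / (B * (x - xs - A / B))) x := by
    intro x hne
    have h1 : HasDerivAt (fun y : ℝ => y - xs - A / B) 1 x := by
      simpa using ((hasDerivAt_id x).sub_const xs).sub_const (A / B)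
    have h2 := h1.log hne
    have h3 := (h2.const_mul (A ^ 2 / B)).const_sub
      (μ xs + (A ^ 2 / B) * Real.log (-A / B))
    exact h3.congr_deriv (by rw [mul_comm B, ← div_div]; ring)
  have hhxs : h xs = μ xs := by
    have e : xs - xs - A / B = -A / B := by ring
    simp only [hh, e]
    ring
  have hgIci : ∀ y ∈ Set.Ici xs, g y = h y := by
    intro y hy
    rcases eq_or_lt_of_le (Set.mem_Ici.mp hy) with rfl | hlt
    · rw [hg, if_pos le_rfl, hhxs]
    · rw [hg, if_neg (not_le.mpr hlt)]
  set G' : ℝ → ℝ := fun x => if x ≤ xs then μ' x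
      else -A ^ 2 / (B * (x - xs - A / B)) with hG'
  have hderiv : ∀ x, HasDerivAt g (G' x) x := by
    intro x
    rcases lt_trichotomy x xs with hlt | heq | hgt
    · have hev : g =ᶠ[nhds x] μ := by
        filter_upwards [Iio_mem_nhds hlt] with y hy
        rw [hg, if_pos (le_of_lt hy)]
      have : G' x = μ' x := if_pos (le_of_lt hlt)
      rw [this]
      exact (hμd x).congr_of_eventuallyEq hev
    · -- x = xs
      rw [heq]
      have hle : HasDerivWithinAt g A (Set.Iic xs) xs := by
        refine ((hμd xs).hasDerivWithinAt.congr ?_ ?_).congr_deriv hA.symm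
        · intro y hy; rw [hg, if_pos (Set.mem_Iic.mp hy)]
        · rw [hg, if_pos le_rfl]
      have hri : HasDerivWithinAt g A (Set.Ici xs) xs := by
        have := (hderivh xs (ne_of_gt (hpos xs le_rfl))).hasDerivWithinAt
          (s := Set.Ici xs)
        rw [hval] at this
        exact this.congr hgIci (hgIci xs (Set.mem_Ici.mpr le_rfl))
      have := hle.union hri
      rw [Set.Iic_union_Ici] at this
      have hGx : G' xs = A := by rw [hG']; simp [hA]
      rw [hGx]
      exact hasDerivWithinAt_univ.mp this
    · have hev : g =ᶠ[nhds x] h := by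
        filter_upwards [Ioi_mem_nhds hgt] with y hy
        exact hgIci y (Set.mem_Ici.mpr (le_of_lt hy))
      have hGx : G' x = -A ^ 2 / (B * (x - xs - A / B)) :=
        if_neg (not_le.mpr hgt)
      rw [hGx]
      exact (hderivh x (ne_of_gt (hpos x (le_of_lt hgt)))).congr_of_eventuallyEq hev
  refine ⟨G', hderiv, ?_, ?_, ?_, ?_⟩
  · intro x hx; exact if_pos hx
  · intro x hx
    rcases eq_or_lt_of_le (hx : xs ≤ x) with heq | hlt
    · subst heq
      rw [hval]
      simp [hG', hA]
    · exact if_neg (not_le.mpr hlt)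
  · simp [hG', hA]
  · exact continuous_iff_continuousAt.mpr fun x => (hderiv x).continuousAt
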